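/- arXiv:1307.4783 — 3 statements merged into one kernel-verified Lean document; each statement's English description precedes it below -/
import Mathlib

section
/- Let 0 → A →(i) B →(p) C → 0 be an exact sequence of Hausdorff, locally compact, totally disconnected topological abelian groups; that is, i is a continuous injective group homomorphism, p is a continuous surjective group homomorphism, and the range of i equals the kernel of p. Assume moreover that i and p are strict morphisms: i is a topological embedding of A onto its image (the image carrying the subspace topology from B), and p is a topological quotient map (C carries the quotient topology induced from B). Then the dual sequence 0 → C^D → B^D → A^D → 0 is exact; explicitly: the map C^D → B^D given by g ↦ g ∘ p is injective, its range is exactly the set of f ∈ B^D with f ∘ i = 0, and the map B^D → A^D given by f ↦ f ∘ i is surjective. -/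
/-- The group `ℚ/ℤ` (the quotient of `ℚ` by `ℤ`), equipped with the discrete topology. -/
def QZ : Type := ℚ ⧸ AddSubgroup.zmultiples (1 : ℚ)

noncomputable instance : AddCommGroup QZ :=
  inferInstanceAs (AddCommGroup (ℚ ⧸ AddSubgroup.zmultiples (1 : ℚ)))

instance : TopologicalSpace QZ := ⊥

instance : DiscreteTopology QZ := ⟨rfl⟩

instance : IsTopologicalAddGroup QZ where
  continuous_add := continuous_of_discreteTopology
  continuous_neg := continuous_of_discreteTopology

noncomputable instance : DivisibleBy ℚ ℕ := AddGroup.divisibleByNatOfDivisibleByInt ℚ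

noncomputable instance : DivisibleBy QZ ℕ :=
  inferInstanceAs (DivisibleBy (ℚ ⧸ AddSubgroup.zmultiples (1 : ℚ)) ℕ)

noncomputable instance : DivisibleBy QZ ℤ := AddGroup.divisibleByIntOfDivisibleByNat QZ

open scoped Pointwise
open Set Filter Topology

/-- In a topological additive group, a compact open set `W` admits a neighborhood `T` of `0`
with `W + T ⊆ W`. -/
lemma exist_add_closure_nhd' {G : Type*} [AddGroup G] [TopologicalSpace G]
    [IsTopologicalAddGroup G] {W : Set G} (Wc : IsCompact W) (Wo : IsOpen W) :
    ∃ T ∈ 𝓝 (0 : G), W + T ⊆ W := by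
  apply Wc.induction_on (p := fun S ↦ ∃ T ∈ 𝓝 (0 : G), S + T ⊆ W)
    ⟨Set.univ, by simp only [univ_mem, empty_add, empty_subset, and_self]⟩
    (fun _ _ huv ⟨T, hT, mem⟩ ↦ ⟨T, hT, (add_subset_add_right huv).trans mem⟩)
    (fun U V ⟨T₁, hT₁, mem1⟩ ⟨T₂, hT₂, mem2⟩ ↦ ⟨T₁ ∩ T₂, inter_mem hT₁ hT₂, by
      rw [union_add]
      exact union_subset (add_subset_add_left inter_subset_left |>.trans mem1)
        (add_subset_add_left inter_subset_right |>.trans mem2)⟩)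
  intro x memW
  have : (x, 0) ∈ (fun p : G × G ↦ p.1 + p.2) ⁻¹' W := by simp [memW]
  rcases isOpen_prod_iff.mp (continuous_add.isOpen_preimage W Wo) x 0 this with
    ⟨U, V, Uopen, Vopen, xmemU, zmemV, prodsub⟩
  have h6 : U + V ⊆ W := add_subset_iff.mpr (fun _ hx _ hy ↦ prodsub (mk_mem_prod hx hy))
  exact ⟨U ∩ W, ⟨U, Uopen.mem_nhds xmemU, W, fun _ a ↦ a, rfl⟩,
    V, Vopen.mem_nhds zmemV, fun _ a ↦ h6 ((add_subset_add_right inter_subset_left) a)⟩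

/-- van Dantzig: in a locally compact, totally disconnected Hausdorff additive group,
every open neighborhood of `0` contains an open subgroup. -/
lemma exists_openAddSubgroup_subset {G : Type*} [AddCommGroup G] [TopologicalSpace G]
    [IsTopologicalAddGroup G] [T2Space G] [LocallyCompactSpace G] [TotallyDisconnectedSpace G]
    {W : Set G} (hWo : IsOpen W) (h0 : (0 : G) ∈ W) :
    ∃ V : AddSubgroup G, IsOpen (V : Set G) ∧ (V : Set G) ⊆ W := by
  obtain ⟨K, hKnhds, hKW, hKc⟩ := local_compact_nhds (hWo.mem_nhds h0)
  obtain ⟨U, hUclopen, hU0, hUK⟩ :=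
    (loc_compact_Haus_tot_disc_of_zero_dim (H := G)).mem_nhds_iff.mp hKnhds
  have hUc : IsCompact U := hKc.of_isClosed_subset hUclopen.1 hUK
  obtain ⟨T, hTnhds, hTadd⟩ := exist_add_closure_nhd' hUc hUclopen.2
  refine ⟨{ carrier := {x | (∀ w ∈ U, w + x ∈ U) ∧ (∀ w ∈ U, w - x ∈ U)}
            zero_mem' := by simp
            add_mem' := by
              rintro a b ⟨ha1, ha2⟩ ⟨hb1, hb2⟩
              constructor
              · intro w hw
                have := hb1 _ (ha1 w hw)
                rwa [add_assoc] at this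
              · intro w hw
                have := hb2 _ (ha2 w hw)
                rwa [sub_sub] at this
            neg_mem' := by
              rintro a ⟨ha1, ha2⟩
              refine ⟨fun w hw => ?_, fun w hw => ?_⟩
              · have := ha2 w hw; rwa [sub_eq_add_neg] at this
              · have := ha1 w hw; rwa [sub_neg_eq_add] }, ?_, ?_⟩
  · apply AddSubgroup.isOpen_of_mem_nhds
    refine Filter.mem_of_superset (Filter.inter_mem hTnhds (neg_mem_nhds_zero G hTnhds)) ?_
    rintro x ⟨hx, hnx⟩
    refine ⟨fun w hw => hTadd (add_mem_add hw hx), fun w hw => ?_⟩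
    rw [sub_eq_add_neg]
    exact hTadd (add_mem_add hw hnx)
  · intro x hx
    exact hKW (hUK (by simpa using hx.1 0 hU0))

/-- A homomorphism into a discrete group whose kernel contains an open subgroup is
continuous. -/
lemma continuous_of_openAddSubgroup_le_ker {G : Type*} [AddCommGroup G] [TopologicalSpace G]
    [IsTopologicalAddGroup G] (f : G →+ QZ) (V : AddSubgroup G) (hVo : IsOpen (V : Set G))
    (hVker : ∀ v ∈ V, f v = 0) : Continuous f := by
  rw [continuous_def]
  intro S _
  rw [isOpen_iff_forall_mem_open]
  intro x hx
  refine ⟨(x + ·) '' (V : Set G), ?_, (Homeomorph.addLeft x).isOpenMap _ hVo, ⟨0, V.zero_mem, by simp⟩⟩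
  rintro _ ⟨v, hv, rfl⟩
  simpa [map_add, hVker v hv] using hx

/-- Lemma 2.7 (Poitou–Tate duality lemma): given a short exact sequence
`0 → A → B → C → 0` of Hausdorff, locally compact, totally disconnected topological
abelian groups with strict morphisms (`i` an embedding onto its image, `p` a quotient
map), the dual sequence `0 → C^D → B^D → A^D → 0` is exact. -/
theorem dual_sequence_exact
    {A B C : Type*}
    [AddCommGroup A] [TopologicalSpace A] [IsTopologicalAddGroup A]
    [AddCommGroup B] [TopologicalSpace B] [IsTopologicalAddGroup B]
    [AddCommGroup C] [TopologicalSpace C] [IsTopologicalAddGroup C]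
    [T2Space A] [LocallyCompactSpace A] [TotallyDisconnectedSpace A]
    [T2Space B] [LocallyCompactSpace B] [TotallyDisconnectedSpace B]
    [T2Space C] [LocallyCompactSpace C] [TotallyDisconnectedSpace C]
    (i : A →+ B) (p : B →+ C)
    (hi_cont : Continuous i) (hp_cont : Continuous p)
    (hi_inj : Function.Injective i) (hp_surj : Function.Surjective p)
    (hexact : i.range = p.ker)
    (hi_strict : Topology.IsEmbedding i)
    (hp_strict : Topology.IsQuotientMap p) :
    (∀ g₁ g₂ : C →+ QZ, Continuous g₁ → Continuous g₂ →
        g₁.comp p = g₂.comp p → g₁ = g₂) ∧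
    (∀ f : B →+ QZ, Continuous f →
        (f.comp i = 0 ↔ ∃ g : C →+ QZ, Continuous g ∧ g.comp p = f)) ∧
    (∀ h : A →+ QZ, Continuous h →
        ∃ f : B →+ QZ, Continuous f ∧ f.comp i = h) := by
  refine ⟨?_, ?_, ?_⟩
  · -- injectivity of the dual of p
    intro g₁ g₂ _ _ hcomp
    ext c
    obtain ⟨b, rfl⟩ := hp_surj c
    exact DFunLike.congr_fun hcomp b
  · -- exactness in the middle
    intro f _
    constructor
    · intro hfi
      have hker : p.ker ≤ f.ker := by
        rw [← hexact]
        rintro _ ⟨a, rfl⟩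
        exact DFunLike.congr_fun hfi a
      set e := QuotientAddGroup.quotientKerEquivOfSurjective p hp_surj with he
      set g₀ := QuotientAddGroup.lift p.ker f hker with hg₀
      refine ⟨g₀.comp (e.symm : C →+ B ⧸ p.ker), ?_, ?_⟩
      · rw [hp_strict.continuous_iff]
        have : (⇑(g₀.comp (e.symm : C →+ B ⧸ p.ker))) ∘ ⇑p = ⇑f := by
          funext b
          have hsymm : e.symm (p b) = QuotientAddGroup.mk b := by
            apply e.injective
            rw [AddEquiv.apply_symm_apply]
            exact (QuotientAddGroup.kerLift_mk p b).symm
          simp [AddMonoidHom.comp_apply, hsymm, hg₀]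
        rw [this]
        exact ‹Continuous f›
      · ext b
        have hsymm : e.symm (p b) = QuotientAddGroup.mk b := by
          apply e.injective
          rw [AddEquiv.apply_symm_apply]
          exact (QuotientAddGroup.kerLift_mk p b).symm
        simp [AddMonoidHom.comp_apply, hsymm, hg₀]
    · rintro ⟨g, _, rfl⟩
      ext a
      have : i a ∈ p.ker := hexact ▸ ⟨a, rfl⟩
      simp [AddMonoidHom.comp_apply, AddMonoidHom.mem_ker.mp this]
  · -- surjectivity of the dual of i
    intro h hh
    have hkero : IsOpen (⇑h ⁻¹' {0} : Set A) := hh.isOpen_preimage _ (isOpen_discrete _)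
    obtain ⟨W, hWo, hWpre⟩ := hi_strict.isInducing.isOpen_iff.mp hkero
    have h0W : (0 : B) ∈ W := by
      have : (0 : A) ∈ ⇑i ⁻¹' W := by rw [hWpre]; simp
      simpa using this
    obtain ⟨V, hVo, hVW⟩ := exists_openAddSubgroup_subset hWo h0W
    have hVker : ∀ a : A, i a ∈ V → h a = 0 := by
      intro a ha
      have : a ∈ ⇑i ⁻¹' W := hVW ha
      rw [hWpre] at this
      simpa using this
    set K : AddSubgroup A := V.comap i with hK
    have hKker : K ≤ h.ker := fun a ha => hVker a ha
    set hbar := QuotientAddGroup.lift K h hKker with hhbar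
    set ibar : A ⧸ K →+ B ⧸ V := QuotientAddGroup.map K V i le_rfl with hibar
    have hibar_inj : Function.Injective ibar := by
      rw [injective_iff_map_eq_zero]
      intro x hx
      obtain ⟨a, rfl⟩ := QuotientAddGroup.mk_surjective x
      rw [hibar] at hx
      have : i a ∈ V := by
        rwa [QuotientAddGroup.map_mk, QuotientAddGroup.eq_zero_iff] at hx
      rw [QuotientAddGroup.eq_zero_iff]
      exact this
    obtain ⟨fbar, hfbar⟩ :=
      (Module.Baer.of_divisible QZ).extension_property_addMonoidHom ibar hibar_inj hbar
    refine ⟨fbar.comp (QuotientAddGroup.mk' V), ?_, ?_⟩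
    · apply continuous_of_openAddSubgroup_le_ker _ V hVo
      intro v hv
      have : (QuotientAddGroup.mk' V) v = 0 := (QuotientAddGroup.eq_zero_iff v).mpr hv
      simp [AddMonoidHom.comp_apply, this]
    · ext a
      have h1 : (QuotientAddGroup.mk' V) (i a) = ibar (QuotientAddGroup.mk a) := by
        simp [hibar, QuotientAddGroup.map_mk]
      have h2 : fbar (ibar (QuotientAddGroup.mk a)) = hbar (QuotientAddGroup.mk a) :=
        DFunLike.congr_fun hfbar (QuotientAddGroup.mk a)
      simp [AddMonoidHom.comp_apply, h1, h2, hhbar]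
end

section
/- Let B be a Hausdorff, locally compact, totally disconnected topological abelian group, and let A ⊆ B be a subgroup equipped with the subspace topology. Then every continuous group homomorphism f : A → ℚ/ℤ extends to a continuous group homomorphism g : B → ℚ/ℤ, i.e., there exists a continuous homomorphism g : B → ℚ/ℤ with g(a) = f(a) for all a ∈ A. -/
open scoped Pointwise
open Set Filter Topology

@[to_additive]
lemma myExistMulClosureNhd {G : Type*} [TopologicalSpace G] [Group G] [IsTopologicalGroup G]
    {W : Set G} (Wcompact : IsCompact W) (Wopen : IsOpen W) : ∃ T ∈ 𝓝 (1 : G), W * T ⊆ W := by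
  apply Wcompact.induction_on (p := fun S ↦ ∃ T ∈ 𝓝 (1 : G), S * T ⊆ W)
    ⟨Set.univ, by simp only [univ_mem, empty_mul, empty_subset, and_self]⟩
    (fun _ _ huv ⟨T, hT, mem⟩ ↦ ⟨T, hT, (mul_subset_mul_right huv).trans mem⟩)
    fun U V ⟨T₁, hT₁, mem1⟩ ⟨T₂, hT₂, mem2⟩ ↦ ⟨T₁ ∩ T₂, inter_mem hT₁ hT₂, by
      rw [union_mul]
      exact union_subset (mul_subset_mul_left inter_subset_left |>.trans mem1)
        (mul_subset_mul_left inter_subset_right |>.trans mem2)⟩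
  intro x memW
  have : (x, 1) ∈ (fun p ↦ p.1 * p.2) ⁻¹' W := by simp [memW]
  rcases isOpen_prod_iff.mp (continuous_mul.isOpen_preimage W Wopen) x 1 this with
    ⟨U, V, Uopen, Vopen, xmemU, onememV, prodsub⟩
  have h6 : U * V ⊆ W := mul_subset_iff.mpr (fun _ hx _ hy ↦ prodsub (mk_mem_prod hx hy))
  exact ⟨U ∩ W, ⟨U, Uopen.mem_nhds xmemU, W, fun _ a ↦ a, rfl⟩,
    V, IsOpen.mem_nhds Vopen onememV, fun _ a ↦ h6 ((mul_subset_mul_right inter_subset_left) a)⟩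

@[to_additive]
theorem myExistOpenSubgroup {G : Type*} [TopologicalSpace G] [Group G] [IsTopologicalGroup G]
    {W : Set G} (Wcompact : IsCompact W) (Wopen : IsOpen W) (einW : 1 ∈ W) :
    ∃ H : Subgroup G, IsOpen (H : Set G) ∧ (H : Set G) ⊆ W := by
  rcases myExistMulClosureNhd Wcompact Wopen with ⟨S, Smemnhds, mulclose⟩
  rcases mem_nhds_iff.mp Smemnhds with ⟨U, UsubS, Uopen, onememU⟩
  set V := U ∩ U⁻¹ with hVdef
  have Vnhd : V ∈ 𝓝 (1 : G) := by simp [V, Uopen.mem_nhds onememU, inv_mem_nhds_one]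
  have Vinv : V⁻¹ = V := by simp [V, inter_comm]
  have Vopen : IsOpen V := Uopen.inter Uopen.inv
  have Vmul : W * V ⊆ W := fun a ha ↦
    mulclose (mul_subset_mul_left UsubS (mul_subset_mul_left inter_subset_left ha))
  let S' : Subgroup G := {
    carrier := ⋃ n, V ^ (n + 1)
    mul_mem' := fun ha hb ↦ by
      rcases mem_iUnion.mp ha with ⟨k, hk⟩
      rcases mem_iUnion.mp hb with ⟨l, hl⟩
      apply mem_iUnion.mpr
      use k + 1 + l
      rw [add_assoc, pow_add]
      exact Set.mul_mem_mul hk hl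
    one_mem' := by
      apply mem_iUnion.mpr
      use 0
      simp [mem_of_mem_nhds Vnhd]
    inv_mem' := fun ha ↦ by
      rcases mem_iUnion.mp ha with ⟨k, hk⟩
      apply mem_iUnion.mpr
      use k
      rw [← Vinv]
      simpa only [inv_pow, Set.mem_inv, inv_inv] using hk }
  have Sopen : IsOpen (⋃ n, V ^ (n + 1)) := by
    refine isOpen_iUnion (fun n ↦ ?_)
    rw [pow_succ]
    exact Vopen.mul_left
  refine ⟨S', Sopen, ?_⟩
  have mulVpow (n : ℕ) : W * V ^ (n + 1) ⊆ W := by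
    induction' n with n ih
    · simp [Vmul]
    · rw [pow_succ, ← mul_assoc]
      exact (Set.mul_subset_mul_right ih).trans Vmul
  have hsub (n : ℕ) : V ^ (n + 1) ⊆ W * V ^ (n + 1) := by
    intro x xin
    rw [Set.mem_mul]
    exact ⟨1, einW, x, xin, one_mul x⟩
  exact iUnion_subset fun i _ a ↦ mulVpow i (hsub i a)

noncomputable instance inst_s1 : DivisibleBy ℚ ℕ := AddGroup.divisibleByNatOfDivisibleByInt ℚ

noncomputable instance inst_s1_2 : DivisibleBy QZ ℕ :=
  inferInstanceAs (DivisibleBy (ℚ ⧸ AddSubgroup.zmultiples (1 : ℚ)) ℕ)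

noncomputable instance inst_s1_3 : DivisibleBy QZ ℤ := AddGroup.divisibleByIntOfDivisibleByNat QZ

/-- Every continuous homomorphism from a subgroup of a Hausdorff, locally compact,
totally disconnected topological abelian group `B` to `ℚ/ℤ` extends to a continuous
homomorphism on all of `B`. -/
theorem extend_continuous_hom_of_locallyCompact
    {B : Type*} [AddCommGroup B] [TopologicalSpace B] [IsTopologicalAddGroup B]
    [T2Space B] [LocallyCompactSpace B] [TotallyDisconnectedSpace B]
    (A : AddSubgroup B) (f : A →+ QZ) (hf : Continuous f) :
    ∃ g : B →+ QZ, Continuous g ∧ ∀ a : A, g a = f a := by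
  -- the kernel of `f` is open in `A`, so contains `V ∩ A` for some open `V ⊆ B`
  have h0 : IsOpen (f ⁻¹' {0}) := (isOpen_discrete _).preimage hf
  obtain ⟨U, Uopen, hU⟩ := isOpen_induced_iff.mp h0
  have hU0 : (0 : B) ∈ U := by
    have : (0 : A) ∈ (Subtype.val ⁻¹' U : Set A) := by
      rw [hU]; simp only [Set.mem_preimage, map_zero, Set.mem_singleton_iff]
    simpa using this
  -- find a compact open neighborhood `W ⊆ U` of `0`
  obtain ⟨C, hCnhds, hCU, hCcomp⟩ := local_compact_nhds (Uopen.mem_nhds hU0)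
  have hbasis : TopologicalSpace.IsTopologicalBasis {s : Set B | IsClopen s} :=
    loc_compact_Haus_tot_disc_of_zero_dim
  obtain ⟨W, hWclopen, hW0, hWsub⟩ :=
    hbasis.mem_nhds_iff.mp (interior_mem_nhds.mpr hCnhds)
  have hWcomp : IsCompact W :=
    hCcomp.of_isClosed_subset hWclopen.isClosed (hWsub.trans interior_subset)
  have hWU : W ⊆ U := (hWsub.trans interior_subset).trans hCU
  -- find an open subgroup `K ⊆ W`
  obtain ⟨K, Kopen, KsubW⟩ := myExistOpenAddSubgroup hWcomp hWclopen.isOpen hW0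
  -- `f` vanishes on `A ∩ K`
  have hker : ∀ a : A, (a : B) ∈ K → f a = 0 := by
    intro a ha
    have : a ∈ (Subtype.val ⁻¹' U : Set A) := hWU (KsubW ha)
    rw [hU] at this
    exact this
  -- build `f̄ : A ⧸ (K ∩ A) →+ QZ` and the injection `j` into `B ⧸ K`
  let N : AddSubgroup A := K.addSubgroupOf A
  let fbar : A ⧸ N →+ QZ := QuotientAddGroup.lift N f (fun a ha ↦ hker a ha)
  let j : A ⧸ N →+ B ⧸ K := QuotientAddGroup.map N K A.subtype le_rfl
  have hj : Function.Injective j := by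
    rw [injective_iff_map_eq_zero]
    intro x hx
    induction x using QuotientAddGroup.induction_on with
    | H a =>
      have h1 : ((a : B) : B ⧸ K) = 0 := hx
      rw [QuotientAddGroup.eq_zero_iff] at h1
      exact (QuotientAddGroup.eq_zero_iff a).2 h1
  have baer : Module.Baer ℤ QZ := Module.Baer.of_divisible QZ
  obtain ⟨gbar, hgbar⟩ := baer.extension_property_addMonoidHom j hj fbar
  refine ⟨gbar.comp (QuotientAddGroup.mk' K), ?_, ?_⟩
  · -- continuity: the map vanishes on the open subgroup `K`
    set g := gbar.comp (QuotientAddGroup.mk' K) with hg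
    have gK : ∀ b ∈ K, g b = 0 := by
      intro b hb
      have : (QuotientAddGroup.mk' K) b = 0 := (QuotientAddGroup.eq_zero_iff b).2 hb
      have h5 : g b = gbar ((QuotientAddGroup.mk' K) b) := rfl
      rw [h5, this, map_zero]
    rw [continuous_def]
    intro s _
    rw [isOpen_iff_mem_nhds]
    intro x hx
    have hVopen : IsOpen ((· - x) ⁻¹' (K : Set B)) :=
      Kopen.preimage (continuous_id.sub continuous_const)
    refine Filter.mem_of_superset (hVopen.mem_nhds (by simp [K.zero_mem])) ?_
    intro y hy
    have h2 : g (y - x) = 0 := gK _ hy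
    rw [map_sub, sub_eq_zero] at h2
    simpa [h2] using hx
  · intro a
    have h3 : j ((a : A ⧸ N)) = (QuotientAddGroup.mk' K) (a : B) := rfl
    have h4 := DFunLike.congr_fun hgbar ((a : A) : A ⧸ N)
    have h5 : fbar ((a : A) : A ⧸ N) = f a := rfl
    simpa [h3, h5] using h4
end

section
/- Let B be a topological abelian group and let A ⊆ B be an open subgroup, equipped with the subspace topology. Then every continuous group homomorphism f : A → ℚ/ℤ extends to a continuous group homomorphism g : B → ℚ/ℤ, i.e., there exists a continuous homomorphism g : B → ℚ/ℤ with g(a) = f(a) for all a ∈ A. -/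
/-- Every continuous homomorphism from an open subgroup of a topological abelian
group `B` to `ℚ/ℤ` extends to a continuous homomorphism on all of `B`. -/
theorem extend_continuous_hom_of_isOpen
    {B : Type*} [AddCommGroup B] [TopologicalSpace B] [IsTopologicalAddGroup B]
    (A : AddSubgroup B) (hA : IsOpen (A : Set B))
    (f : A →+ QZ) (hf : Continuous f) :
    ∃ g : B →+ QZ, Continuous g ∧ ∀ a : A, g a = f a := by
  obtain ⟨g, hg⟩ := (Module.Baer.of_divisible (A := QZ)).extension_property_addMonoidHom
    A.subtype Subtype.val_injective f
  have hext : ∀ a : A, g a = f a := fun a => DFunLike.congr_fun hg a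
  refine ⟨g, ?_, hext⟩
  -- continuity
  apply continuous_of_continuousAt_zero g
  have hV : IsOpen (Subtype.val '' (f ⁻¹' {0} : Set A)) :=
    hA.isOpenMap_subtype_val _ (hf.isOpen_preimage _ (isOpen_discrete _))
  have h0 : (0 : B) ∈ Subtype.val '' (f ⁻¹' {0} : Set A) :=
    ⟨0, by simp, rfl⟩
  have hmem : g ⁻¹' {0} ∈ nhds (0 : B) := by
    apply Filter.mem_of_superset (hV.mem_nhds h0)
    rintro x ⟨a, ha, rfl⟩
    simp only [Set.mem_preimage, Set.mem_singleton_iff] at ha ⊢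
    rw [hext a, ha]
  rw [ContinuousAt, map_zero]
  intro s hs
  exact Filter.mem_of_superset hmem fun x hx =>
    Set.mem_singleton_iff.1 hx ▸ mem_of_mem_nhds hs
end
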